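/- Let H and K be cumulative distribution functions on ℝ and let H⋆K denote their convolution (the distribution function of X+Y where X, Y are independent with distributions H and K). Then for every real t, 1 − (H⋆K)(t) = ∫_{(−∞, t/2]} H̄(t−x) dK(x) + ∫_{(−∞, t/2]} K̄(t−x) dH(x) + H̄(t/2)·K̄(t/2), where H̄(s) = P(X > s) and K̄(s) = P(Y > s) denote the (strict) tail functions and the integrals are Lebesgue–Stieltjes integrals over the closed half-line (−∞, t/2]. -/

import Mathlib

open MeasureTheory Filter Set

noncomputable section

lemma aux_meas (σ : MeasureTheory.Measure ℝ) (t : ℝ) :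
    Measurable (fun x => σ (Set.Ioi (t - x))) := by
  have h : Monotone (fun x => σ (Set.Ioi (t - x))) := fun a b hab =>
    measure_mono (Ioi_subset_Ioi (by linarith))
  exact h.measurable

lemma aux_set_meas (t : ℝ) :
    MeasurableSet {p : ℝ × ℝ | p.1 ≤ t / 2 ∧ t - p.1 < p.2} := by
  have : {p : ℝ × ℝ | p.1 ≤ t / 2 ∧ t - p.1 < p.2}
      = {p : ℝ × ℝ | p.1 ≤ t / 2} ∩ {p : ℝ × ℝ | t - p.1 < p.2} := rfl
  rw [this]
  exact (measurableSet_le measurable_fst measurable_const).inter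
    (measurableSet_lt (measurable_const.sub measurable_fst) measurable_snd)

lemma aux_prod (ρ σ : MeasureTheory.Measure ℝ) [SFinite σ] (t : ℝ) :
    (ρ.prod σ) {p : ℝ × ℝ | p.1 ≤ t / 2 ∧ t - p.1 < p.2}
      = ∫⁻ x in Set.Iic (t / 2), σ (Set.Ioi (t - x)) ∂ρ := by
  rw [Measure.prod_apply (aux_set_meas t)]
  rw [← lintegral_indicator measurableSet_Iic]
  congr 1
  funext x
  by_cases hx : x ≤ t / 2
  · have : (Prod.mk x ⁻¹' {p : ℝ × ℝ | p.1 ≤ t / 2 ∧ t - p.1 < p.2}) = Set.Ioi (t - x) := by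
      ext y; simp [hx, Set.mem_Ioi]
    rw [this, Set.indicator_of_mem (Set.mem_Iic.mpr hx)]
  · have : (Prod.mk x ⁻¹' {p : ℝ × ℝ | p.1 ≤ t / 2 ∧ t - p.1 < p.2}) = (∅ : Set ℝ) := by
      ext y; simp [hx]
    rw [this, Set.indicator_of_notMem (by simpa using hx), measure_empty]

lemma aux_toReal (ρ σ : MeasureTheory.Measure ℝ) [IsProbabilityMeasure σ] (t : ℝ) :
    (∫⁻ x in Set.Iic (t / 2), σ (Set.Ioi (t - x)) ∂ρ).toReal
      = ∫ x in Set.Iic (t / 2), (σ (Set.Ioi (t - x))).toReal ∂ρ := by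
  rw [integral_toReal ((aux_meas σ t).aemeasurable)]
  exact Filter.Eventually.of_forall fun x => lt_of_le_of_lt prob_le_one (by norm_num)

/-- tail decomposition of a convolution. For probability measures `μ` (law of
`X`, distribution function `H`) and `ν` (law of `Y`, distribution function `K`),
`1 − (H⋆K)(t) = P(X+Y > t)` equals
`∫_{(−∞,t/2]} H̄(t−x) dK(x) + ∫_{(−∞,t/2]} K̄(t−x) dH(x) + H̄(t/2)·K̄(t/2)`. -/
theorem stmt_6 (μ ν : Measure ℝ) [IsProbabilityMeasure μ] [IsProbabilityMeasure ν] (t : ℝ) :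
    ((Measure.map (fun p : ℝ × ℝ => p.1 + p.2) (μ.prod ν)) (Set.Ioi t)).toReal
      = (∫ x in Set.Iic (t / 2), (μ (Set.Ioi (t - x))).toReal ∂ν)
        + (∫ x in Set.Iic (t / 2), (ν (Set.Ioi (t - x))).toReal ∂μ)
        + (μ (Set.Ioi (t / 2))).toReal * (ν (Set.Ioi (t / 2))).toReal := by
  set A : Set (ℝ × ℝ) := {p | p.2 ≤ t / 2 ∧ t - p.2 < p.1} with hA
  set B : Set (ℝ × ℝ) := {p | p.1 ≤ t / 2 ∧ t - p.1 < p.2} with hB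
  set C : Set (ℝ × ℝ) := Set.Ioi (t / 2) ×ˢ Set.Ioi (t / 2) with hC
  have hAmeas : MeasurableSet A := by
    have : A = Prod.swap ⁻¹' {p : ℝ × ℝ | p.1 ≤ t / 2 ∧ t - p.1 < p.2} := by
      ext p; simp [hA]
    rw [this]; exact (aux_set_meas t).preimage measurable_swap
  have hBmeas : MeasurableSet B := aux_set_meas t
  have hCmeas : MeasurableSet C := measurableSet_Ioi.prod measurableSet_Ioi
  have hpre : (fun p : ℝ × ℝ => p.1 + p.2) ⁻¹' Set.Ioi t = A ∪ B ∪ C := by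
    ext ⟨x, y⟩
    simp only [Set.mem_preimage, Set.mem_Ioi, Set.mem_union, hA, hB, hC, Set.mem_setOf_eq,
      Set.mem_prod]
    constructor
    · intro h
      by_cases hy : y ≤ t / 2
      · exact Or.inl (Or.inl ⟨hy, by linarith⟩)
      · by_cases hx : x ≤ t / 2
        · exact Or.inl (Or.inr ⟨hx, by linarith⟩)
        · exact Or.inr ⟨by linarith, by linarith⟩
    · rintro ((⟨h1, h2⟩ | ⟨h1, h2⟩) | ⟨h1, h2⟩) <;> linarith
  have hdisjAB : Disjoint A B := by
    rw [Set.disjoint_left]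
    rintro ⟨x, y⟩ ⟨h1, h2⟩ ⟨h3, h4⟩
    simp only at *; linarith
  have hdisjABC : Disjoint (A ∪ B) C := by
    rw [Set.disjoint_left]
    rintro ⟨x, y⟩ (⟨h1, h2⟩ | ⟨h1, h2⟩) ⟨h3, h4⟩ <;> (simp only [Set.mem_Ioi] at *; linarith)
  have hmap : (Measure.map (fun p : ℝ × ℝ => p.1 + p.2) (μ.prod ν)) (Set.Ioi t)
      = (μ.prod ν) A + (μ.prod ν) B + (μ.prod ν) C := by
    rw [Measure.map_apply (f := fun p : ℝ × ℝ => p.1 + p.2) (measurable_fst.add measurable_snd) measurableSet_Ioi, hpre,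
      measure_union hdisjABC hCmeas, measure_union hdisjAB hBmeas]
  have hAval : (μ.prod ν) A = ∫⁻ x in Set.Iic (t / 2), μ (Set.Ioi (t - x)) ∂ν := by
    have hswap : (μ.prod ν) A = (ν.prod μ) {p : ℝ × ℝ | p.1 ≤ t / 2 ∧ t - p.1 < p.2} := by
      conv_rhs => rw [← Measure.prod_swap]
      rw [Measure.map_apply measurable_swap (aux_set_meas t)]
      rfl
    rw [hswap, aux_prod]
  have hBval : (μ.prod ν) B = ∫⁻ x in Set.Iic (t / 2), ν (Set.Ioi (t - x)) ∂μ :=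
    aux_prod μ ν t
  have hCval : (μ.prod ν) C = μ (Set.Ioi (t / 2)) * ν (Set.Ioi (t / 2)) :=
    Measure.prod_prod _ _
  have hfin1 : (μ.prod ν) A ≠ ⊤ := (measure_lt_top _ _).ne
  have hfin2 : (μ.prod ν) B ≠ ⊤ := (measure_lt_top _ _).ne
  rw [hmap, ENNReal.toReal_add (by finiteness) (by finiteness),
    ENNReal.toReal_add hfin1 hfin2, hAval, hBval, hCval, ENNReal.toReal_mul,
    aux_toReal, aux_toReal]
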